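/- Let k ≥ 3, n = 2k+1, and let G be a 2-connected nonhamiltonian n-vertex graph with δ(G) ≥ k whose longest cycle C has length 2k. If v is the vertex not on C, then v has exactly k neighbors on C, no two consecutive, and the k+1 vertices of C not adjacent to v together with v form an independent set. -/

import Mathlib

lemma stmt8_cast_inj {N a b : ℕ} (ha1 : 1 ≤ a) (ha : a ≤ N) (hb1 : 1 ≤ b) (hb : b ≤ N)
    (h : (a : ZMod N) = (b : ZMod N)) : a = b := by
  haveI : NeZero N := ⟨by omega⟩
  rcases lt_or_eq_of_le ha with ha' | haN
  · rcases lt_or_eq_of_le hb with hb' | hbN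
    · have := congrArg ZMod.val h
      rwa [ZMod.val_cast_of_lt ha', ZMod.val_cast_of_lt hb'] at this
    · exfalso
      rw [hbN, ZMod.natCast_self] at h
      have := congrArg ZMod.val h
      rw [ZMod.val_cast_of_lt ha', ZMod.val_zero] at this
      omega
  · rcases lt_or_eq_of_le hb with hb' | hbN
    · exfalso
      rw [haN, ZMod.natCast_self] at h
      have := congrArg ZMod.val h.symm
      rw [ZMod.val_cast_of_lt hb', ZMod.val_zero] at this
      omega
    · omega

/-- Let `k ≥ 3`, `n = 2k+1`, and `G` a 2-connected nonhamiltonian `n`-vertex graph with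
minimum degree at least `k`, whose longest cycle `C` (given by an injective cyclic map
`f : ZMod (2k) → V`) has length `2k`. If `v` is the vertex off `C`, then `v` has exactly
`k` neighbors on `C`, no two of them consecutive, and the vertices of `C` not adjacent
to `v` together with `v` form an independent set. -/
theorem stmt_8 {V : Type*} [Fintype V] [DecidableEq V] (G : SimpleGraph V)
    [DecidableRel G.Adj] (k : ℕ) (hk : 3 ≤ k)
    (hn : Fintype.card V = 2 * k + 1)
    (h2conn : 3 ≤ Fintype.card V ∧ ∀ u : V, (G.induce {w : V | w ≠ u}).Connected)
    (hham : ¬ G.IsHamiltonian)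
    (hδ : ∀ u : V, k ≤ G.degree u)
    (f : ZMod (2 * k) → V) (hf : Function.Injective f)
    (hcyc : ∀ i, G.Adj (f i) (f (i + 1)))
    (hlongest : ∀ (ℓ : ℕ) (g : ZMod ℓ → V), Function.Injective g →
      (∀ i, G.Adj (g i) (g (i + 1))) → ℓ ≤ 2 * k)
    (v : V) (hv : v ∉ Set.range f) :
    {i : ZMod (2 * k) | G.Adj v (f i)}.ncard = k ∧
    (∀ i : ZMod (2 * k), ¬ (G.Adj v (f i) ∧ G.Adj v (f (i + 1)))) ∧
    (∀ a ∈ {v} ∪ {x : V | ∃ i, x = f i ∧ ¬ G.Adj v (f i)},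
      ∀ b ∈ {v} ∪ {x : V | ∃ i, x = f i ∧ ¬ G.Adj v (f i)}, ¬ G.Adj a b) := by
  classical
  haveI : NeZero (2 * k) := ⟨by omega⟩
  haveI : Fact (1 < 2 * k) := ⟨by omega⟩
  haveI : Fact (1 < 2 * k + 1) := ⟨by omega⟩
  -- Step A : every vertex other than v is on the cycle
  have hrange : ∀ u : V, u ≠ v → ∃ i, f i = u := by
    intro u hu
    by_contra h
    push_neg at h
    have hvmem : v ∉ Finset.univ.image f := by
      simp only [Finset.mem_image, Finset.mem_univ, true_and]
      rintro ⟨i, rfl⟩; exact hv ⟨i, rfl⟩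
    have humem : u ∉ insert v (Finset.univ.image f) := by
      simp only [Finset.mem_insert, Finset.mem_image, Finset.mem_univ, true_and]
      rintro (rfl | ⟨i, hi⟩)
      · exact hu rfl
      · exact h i hi
    have hcard : (insert u (insert v (Finset.univ.image f))).card ≤ Fintype.card V :=
      Finset.card_le_univ _
    rw [Finset.card_insert_of_notMem humem, Finset.card_insert_of_notMem hvmem,
      Finset.card_image_of_injective _ hf, Finset.card_univ, ZMod.card] at hcard
    omega
  -- Step B : no two consecutive neighbors of v on C
  have stepB : ∀ i : ZMod (2 * k), ¬ (G.Adj v (f i) ∧ G.Adj v (f (i + 1))) := by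
    rintro i ⟨h1, h2⟩
    set g : ZMod (2 * k + 1) → V :=
      fun m => if m = 0 then v else f (i + (m.val : ZMod (2 * k))) with hg
    have hg0 : g 0 = v := by simp [hg]
    have hgne : ∀ m : ZMod (2 * k + 1), m ≠ 0 → g m = f (i + (m.val : ZMod (2 * k))) := by
      intro m hm; simp [hg, hm]
    have hinj : Function.Injective g := by
      intro m m' hmm
      by_cases hm : m = 0 <;> by_cases hm' : m' = 0
      · rw [hm, hm']
      · exfalso
        rw [hm, hg0, hgne m' hm'] at hmm
        exact hv ⟨_, hmm.symm⟩
      · exfalso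
        rw [hm', hg0, hgne m hm] at hmm
        exact hv ⟨_, hmm⟩
      · rw [hgne m hm, hgne m' hm'] at hmm
        have hval := add_left_cancel (hf hmm)
        have hm1 : 1 ≤ m.val := Nat.one_le_iff_ne_zero.mpr
          (fun h => hm ((ZMod.val_eq_zero m).mp h))
        have hm'1 : 1 ≤ m'.val := Nat.one_le_iff_ne_zero.mpr
          (fun h => hm' ((ZMod.val_eq_zero m').mp h))
        have hmle : m.val ≤ 2 * k := by have := ZMod.val_lt m; omega
        have hm'le : m'.val ≤ 2 * k := by have := ZMod.val_lt m'; omega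
        have := stmt8_cast_inj hm1 hmle hm'1 hm'le hval
        exact ZMod.val_injective _ this
    have hadj : ∀ m, G.Adj (g m) (g (m + 1)) := by
      intro m
      by_cases hm : m = 0
      · subst hm
        rw [zero_add, hg0, hgne 1 one_ne_zero, ZMod.val_one, Nat.cast_one]
        exact h2
      · have hm1 : m.val ≠ 0 := fun h => hm ((ZMod.val_eq_zero m).mp h)
        have hmlt : m.val < 2 * k + 1 := ZMod.val_lt m
        by_cases hmN : m.val = 2 * k
        · have hmeq : m = ((2 * k : ℕ) : ZMod (2 * k + 1)) := by
            conv_lhs => rw [← ZMod.natCast_rightInverse m]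
            rw [hmN]
          have hm10 : m + 1 = 0 := by
            rw [hmeq, show ((2 * k : ℕ) : ZMod (2 * k + 1)) + 1 = ((2 * k + 1 : ℕ) : ZMod (2 * k + 1)) by push_cast; ring, ZMod.natCast_self]
          rw [hm10, hg0, hgne m hm, hmN, ZMod.natCast_self, add_zero]
          exact h1.symm
        · have hv1 : (m + 1).val = m.val + 1 := by
            rw [ZMod.val_add_of_lt (by rw [ZMod.val_one]; omega), ZMod.val_one]
          have hne : m + 1 ≠ 0 := by
            intro h; rw [h, ZMod.val_zero] at hv1; omega
          rw [hgne m hm, hgne _ hne, hv1,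
            show ((m.val + 1 : ℕ) : ZMod (2 * k)) = (m.val : ZMod (2 * k)) + 1 by push_cast; ring,
            ← add_assoc]
          exact hcyc _
    have := hlongest (2 * k + 1) g hinj hadj
    omega
  -- Step C : counting
  set Sf : Finset (ZMod (2 * k)) := Finset.univ.filter (fun i => G.Adj v (f i)) with hSfdef
  have hmemS : ∀ i, i ∈ Sf ↔ G.Adj v (f i) := by intro i; simp [hSfdef]
  have himg : Sf.image f = G.neighborFinset v := by
    ext u
    simp only [Finset.mem_image, SimpleGraph.mem_neighborFinset, hSfdef, Finset.mem_filter,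
      Finset.mem_univ, true_and]
    constructor
    · rintro ⟨i, hi, rfl⟩; exact hi
    · intro hu
      obtain ⟨i, rfl⟩ := hrange u (G.ne_of_adj hu).symm
      exact ⟨i, hu, rfl⟩
  have hdeg : Sf.card = G.degree v := by
    rw [← Finset.card_image_of_injective Sf hf, himg]; rfl
  have hdisj : Disjoint Sf (Sf.image (· + 1)) := by
    rw [Finset.disjoint_left]
    intro i hi hi'
    obtain ⟨j, hj, hji⟩ := Finset.mem_image.mp hi'
    exact stepB j ⟨(hmemS j).mp hj, by rw [hji]; exact (hmemS i).mp hi⟩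
  have hcardu : (Sf ∪ Sf.image (· + 1)).card = Sf.card + Sf.card := by
    rw [Finset.card_union_of_disjoint hdisj,
      Finset.card_image_of_injective _ (add_left_injective (1 : ZMod (2 * k)))]
  have hcard2 : Sf.card + Sf.card ≤ 2 * k := by
    have h1 : (Sf ∪ Sf.image (· + 1)).card ≤ Fintype.card (ZMod (2 * k)) :=
      Finset.card_le_univ _
    rw [hcardu, ZMod.card] at h1
    exact h1
  have hSk : Sf.card = k := by
    have := hδ v; omega
  -- complement of S is S + 1
  have hcompl : ∀ b : ZMod (2 * k), ¬ G.Adj v (f b) → G.Adj v (f (b - 1)) := by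
    intro b hb
    have hbu : b ∈ Sf ∪ Sf.image (· + 1) := by
      have hcc : (Sf ∪ Sf.image (· + 1)).card = Fintype.card (ZMod (2 * k)) := by
        rw [hcardu, ZMod.card]; omega
      rw [Finset.eq_univ_of_card _ hcc]
      exact Finset.mem_univ b
    rcases Finset.mem_union.mp hbu with h | h
    · exact absurd ((hmemS b).mp h) hb
    · obtain ⟨j, hj, hjb⟩ := Finset.mem_image.mp h
      have : b - 1 = j := by rw [← hjb]; ring
      rw [this]; exact (hmemS j).mp hj
  -- rotation lemma
  have rot : ∀ (i t : ZMod (2 * k)), t ≠ 0 → G.Adj v (f i) → G.Adj v (f (i + t)) →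
      ¬ G.Adj (f (i + 1)) (f (i + t + 1)) := by
    intro i t ht h1 h2 hadjc
    have hT1 : 1 ≤ t.val := Nat.one_le_iff_ne_zero.mpr
      (fun h => ht ((ZMod.val_eq_zero t).mp h))
    have hTlt : t.val < 2 * k := ZMod.val_lt t
    have htT : ((t.val : ℕ) : ZMod (2 * k)) = t := ZMod.natCast_rightInverse t
    set g : ZMod (2 * k + 1) → V := fun m =>
      if m = 0 then v else if m.val ≤ t.val then f (i + t + 1 - (m.val : ZMod (2 * k)))
      else f (i + (m.val : ZMod (2 * k))) with hg
    have hg0 : g 0 = v := by simp [hg]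
    have hgle : ∀ m : ZMod (2 * k + 1), m ≠ 0 → m.val ≤ t.val →
        g m = f (i + t + 1 - (m.val : ZMod (2 * k))) := by
      intro m hm hmt; simp [hg, hm, hmt]
    have hggt : ∀ m : ZMod (2 * k + 1), m ≠ 0 → ¬ (m.val ≤ t.val) →
        g m = f (i + (m.val : ZMod (2 * k))) := by
      intro m hm hmt; simp [hg, hm, hmt]
    have hinj : Function.Injective g := by
      intro m m' hmm
      by_cases hm : m = 0 <;> by_cases hm' : m' = 0
      · rw [hm, hm']
      · exfalso
        rw [hm, hg0] at hmm
        by_cases h' : m'.val ≤ t.val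
        · rw [hgle m' hm' h'] at hmm; exact hv ⟨_, hmm.symm⟩
        · rw [hggt m' hm' h'] at hmm; exact hv ⟨_, hmm.symm⟩
      · exfalso
        rw [hm', hg0] at hmm
        by_cases h' : m.val ≤ t.val
        · rw [hgle m hm h'] at hmm; exact hv ⟨_, hmm⟩
        · rw [hggt m hm h'] at hmm; exact hv ⟨_, hmm⟩
      · have hm1 : 1 ≤ m.val := Nat.one_le_iff_ne_zero.mpr
          (fun h => hm ((ZMod.val_eq_zero m).mp h))
        have hm'1 : 1 ≤ m'.val := Nat.one_le_iff_ne_zero.mpr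
          (fun h => hm' ((ZMod.val_eq_zero m').mp h))
        have hmle : m.val ≤ 2 * k := by have := ZMod.val_lt m; omega
        have hm'le : m'.val ≤ 2 * k := by have := ZMod.val_lt m'; omega
        by_cases hA : m.val ≤ t.val <;> by_cases hB : m'.val ≤ t.val
        · rw [hgle m hm hA, hgle m' hm' hB] at hmm
          have h3 := hf hmm
          have hval : ((m.val : ℕ) : ZMod (2 * k)) = ((m'.val : ℕ) : ZMod (2 * k)) := by
            linear_combination -h3
          exact ZMod.val_injective _ (stmt8_cast_inj hm1 hmle hm'1 hm'le hval)
        · exfalso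
          rw [hgle m hm hA, hggt m' hm' hB] at hmm
          have h3 := hf hmm
          have hval : ((t.val + 1 - m.val : ℕ) : ZMod (2 * k)) =
              ((m'.val : ℕ) : ZMod (2 * k)) := by
            push_cast [Nat.cast_sub (by omega : m.val ≤ t.val + 1)]
            rw [htT]
            linear_combination h3
          have := stmt8_cast_inj (by omega) (by omega) hm'1 hm'le hval
          omega
        · exfalso
          rw [hggt m hm hA, hgle m' hm' hB] at hmm
          have h3 := hf hmm
          have hval : ((t.val + 1 - m'.val : ℕ) : ZMod (2 * k)) =
              ((m.val : ℕ) : ZMod (2 * k)) := by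
            push_cast [Nat.cast_sub (by omega : m'.val ≤ t.val + 1)]
            rw [htT]
            linear_combination -h3
          have := stmt8_cast_inj (by omega) (by omega) hm1 hmle hval
          omega
        · rw [hggt m hm hA, hggt m' hm' hB] at hmm
          have hval := add_left_cancel (hf hmm)
          exact ZMod.val_injective _ (stmt8_cast_inj hm1 hmle hm'1 hm'le hval)
    have hadj : ∀ m, G.Adj (g m) (g (m + 1)) := by
      intro m
      by_cases hm : m = 0
      · subst hm
        rw [zero_add, hg0, hgle 1 one_ne_zero (by rw [ZMod.val_one]; omega), ZMod.val_one,
          Nat.cast_one, add_sub_cancel_right]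
        exact h2
      · have hm1 : m.val ≠ 0 := fun h => hm ((ZMod.val_eq_zero m).mp h)
        have hmlt : m.val < 2 * k + 1 := ZMod.val_lt m
        by_cases hmN : m.val = 2 * k
        · have hmeq : m = ((2 * k : ℕ) : ZMod (2 * k + 1)) := by
            conv_lhs => rw [← ZMod.natCast_rightInverse m]
            rw [hmN]
          have hm10 : m + 1 = 0 := by
            rw [hmeq, show ((2 * k : ℕ) : ZMod (2 * k + 1)) + 1 =
              ((2 * k + 1 : ℕ) : ZMod (2 * k + 1)) by push_cast; ring, ZMod.natCast_self]
          rw [hm10, hg0, hggt m hm (by omega), hmN, ZMod.natCast_self, add_zero]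
          exact h1.symm
        · have hv1 : (m + 1).val = m.val + 1 := by
            rw [ZMod.val_add_of_lt (by rw [ZMod.val_one]; omega), ZMod.val_one]
          have hne : m + 1 ≠ 0 := by
            intro h; rw [h, ZMod.val_zero] at hv1; omega
          rcases lt_trichotomy m.val t.val with hc | hc | hc
          · rw [hgle m hm (by omega), hgle _ hne (by omega), hv1,
              show i + t + 1 - ((m.val : ℕ) : ZMod (2 * k)) = (i + t - (m.val : ℕ)) + 1 by ring,
              show i + t + 1 - ((m.val + 1 : ℕ) : ZMod (2 * k)) = i + t - (m.val : ℕ) by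
                push_cast; ring]
            exact (hcyc _).symm
          · rw [hgle m hm (by omega), hggt _ hne (by omega), hv1, hc, htT,
              show i + t + 1 - t = i + 1 by ring,
              show ((t.val + 1 : ℕ) : ZMod (2 * k)) = t + 1 by push_cast [htT]; ring,
              ← add_assoc]
            exact hadjc
          · rw [hggt m hm (by omega), hggt _ hne (by omega), hv1,
              show ((m.val + 1 : ℕ) : ZMod (2 * k)) = (m.val : ZMod (2 * k)) + 1 by
                push_cast; ring, ← add_assoc]
            exact hcyc _
    have := hlongest (2 * k + 1) g hinj hadj
    omega
  refine ⟨?_, stepB, ?_⟩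
  · have hset : {i : ZMod (2 * k) | G.Adj v (f i)} = ↑Sf := by
      ext i; simp [hmemS]
    rw [hset, Set.ncard_coe_finset, hSk]
  · intro a ha b hb hab
    simp only [Set.mem_union, Set.mem_singleton_iff, Set.mem_setOf_eq] at ha hb
    rcases ha with rfl | ⟨a', rfl, hna⟩
    · rcases hb with rfl | ⟨b', rfl, hnb⟩
      · exact G.loopless.irrefl _ hab
      · exact hnb hab
    · rcases hb with rfl | ⟨b', rfl, hnb⟩
      · exact hna hab.symm
      · have hne : a' ≠ b' := fun h => G.loopless.irrefl _ (h ▸ hab)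
        have h1 := hcompl a' hna
        have h2 := hcompl b' hnb
        have hrot := rot (a' - 1) (b' - a') (sub_ne_zero_of_ne (Ne.symm hne)) h1
          (by rw [show a' - 1 + (b' - a') = b' - 1 by ring]; exact h2)
        apply hrot
        rw [show a' - 1 + 1 = a' by ring, show a' - 1 + (b' - a') + 1 = b' by ring]
        exact hab
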